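/- The function s(v) = 1 - ∑_{k=1}^{∞} β_k v^{2k}, where β_1 = 1/4 and β_{k+1} = β_k · ((4k-1)(4k+1))/((2k+2)²), satisfies on (0, 1/2) the second-order ODE v(1-4v²)s'' + (1-4v²)s' + v·s = 0. -/

import Mathlib

/-- Coefficients of Euler's series in `v` (with `n = 2v`): `β 1 = 1/4`,
`β (k+1) = β k · ((4k-1)(4k+1))/((2k+2)²)`. -/
noncomputable def eulerBeta : ℕ → ℝ
  | 0 => 0
  | 1 => 1 / 4
  | (k + 2) =>
      eulerBeta (k + 1) *
        ((4 * (k + 1 : ℝ) - 1) * (4 * (k + 1 : ℝ) + 1)) / ((2 * (k + 1 : ℝ) + 2) ^ 2)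

/-- Euler's series `s(v) = 1 - ∑_{k≥1} β_k v^{2k}`. -/
noncomputable def eulerS (v : ℝ) : ℝ :=
  1 - ∑' k : ℕ, eulerBeta (k + 1) * v ^ (2 * (k + 1))

lemma eulerBeta_succ (k : ℕ) : eulerBeta (k + 2) =
    eulerBeta (k + 1) *
      ((4 * (k + 1 : ℝ) - 1) * (4 * (k + 1 : ℝ) + 1)) / ((2 * (k + 1 : ℝ) + 2) ^ 2) := rfl

lemma eulerBeta_bound (k : ℕ) : 0 ≤ eulerBeta (k + 1) ∧ eulerBeta (k + 1) ≤ 4 ^ (k + 1) := by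
  induction k with
  | zero =>
      have h : eulerBeta 1 = 1 / 4 := rfl
      constructor <;> rw [h] <;> norm_num
  | succ n ih =>
      obtain ⟨h0, h1⟩ := ih
      rw [eulerBeta_succ]
      have hn : (0:ℝ) ≤ (n:ℝ) := Nat.cast_nonneg n
      have hd : (0:ℝ) < (2 * (n + 1 : ℝ) + 2) ^ 2 := by positivity
      have hratio0 : (0:ℝ) ≤ (4 * (n + 1 : ℝ) - 1) * (4 * (n + 1 : ℝ) + 1) := by nlinarith
      have hratio4 : (4 * (n + 1 : ℝ) - 1) * (4 * (n + 1 : ℝ) + 1) ≤ 4 * (2 * (n + 1 : ℝ) + 2) ^ 2 := by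
        nlinarith
      constructor
      · positivity
      · rw [div_le_iff₀ hd]
        calc eulerBeta (n + 1) * ((4 * (n + 1 : ℝ) - 1) * (4 * (n + 1 : ℝ) + 1))
            ≤ 4 ^ (n + 1) * (4 * (2 * (n + 1 : ℝ) + 2) ^ 2) := by
              apply mul_le_mul h1 hratio4 hratio0 (by positivity)
          _ = 4 ^ (n + 2) * (2 * (n + 1 : ℝ) + 2) ^ 2 := by ring

lemma summable_poly_geom {q : ℝ} (hq : |q| < 1) (a b c : ℝ) :
    Summable (fun k : ℕ => (a * (k : ℝ) ^ 2 + b * (k : ℝ) + c) * q ^ k) := by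
  have h2 : Summable (fun k : ℕ => (k : ℝ) ^ 2 * q ^ k) :=
    summable_pow_mul_geometric_of_norm_lt_one 2 (by simpa using hq)
  have h1 : Summable (fun k : ℕ => (k : ℝ) ^ 1 * q ^ k) :=
    summable_pow_mul_geometric_of_norm_lt_one 1 (by simpa using hq)
  have h0 : Summable (fun k : ℕ => q ^ k) :=
    summable_geometric_of_norm_lt_one (by simpa using hq)
  exact (((h2.mul_left a).add (h1.mul_left b)).add (h0.mul_left c)).congr (fun k => by ring)

theorem euler_series_ode (v : ℝ) (hv : v ∈ Set.Ioo (0 : ℝ) (1 / 2)) :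
    v * (1 - 4 * v ^ 2) * deriv (deriv eulerS) v +
        (1 - 4 * v ^ 2) * deriv eulerS v + v * eulerS v = 0 := by
  obtain ⟨hv0, hv2⟩ := hv
  set r : ℝ := (2 * v + 1) / 4 with hrdef
  have hvr : v < r := by rw [hrdef]; linarith
  have hr0 : 0 < r := by rw [hrdef]; linarith
  have hr2 : r < 1 / 2 := by rw [hrdef]; linarith
  have hq1 : 4 * r ^ 2 < 1 := by nlinarith
  have hqabs : |4 * r ^ 2| < 1 := abs_lt.mpr ⟨by nlinarith, hq1⟩
  set s : Set ℝ := Set.Ioo (-r) r with hsdef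
  have hs : IsOpen s := isOpen_Ioo
  have hsc : IsPreconnected s := isPreconnected_Ioo
  have hvs : v ∈ s := ⟨by linarith, hvr⟩
  have hxr : ∀ x ∈ s, |x| ≤ r := fun x hx => le_of_lt (abs_lt.mpr ⟨hx.1, hx.2⟩)
  have hb0 : ∀ k : ℕ, 0 ≤ eulerBeta (k + 1) := fun k => (eulerBeta_bound k).1
  have hb4 : ∀ k : ℕ, eulerBeta (k + 1) ≤ 4 ^ (k + 1) := fun k => (eulerBeta_bound k).2
  -- the three termwise series
  set f : ℕ → ℝ → ℝ := fun k x => eulerBeta (k + 1) * x ^ (2 * k + 2) with hfdef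
  set f1 : ℕ → ℝ → ℝ := fun k x => eulerBeta (k + 1) * (2 * (k : ℝ) + 2) * x ^ (2 * k + 1)
    with hf1def
  set f2 : ℕ → ℝ → ℝ :=
    fun k x => eulerBeta (k + 1) * ((2 * (k : ℝ) + 2) * (2 * (k : ℝ) + 1)) * x ^ (2 * k)
    with hf2def
  -- derivatives
  have hder : ∀ (k : ℕ) (x : ℝ), HasDerivAt (f k) (f1 k x) x := by
    intro k x
    simp only [hfdef, hf1def]
    have h := (hasDerivAt_pow (2 * k + 2) x).const_mul (eulerBeta (k + 1))
    convert h using 1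
    all_goals try rfl
    rw [show 2 * k + 2 - 1 = 2 * k + 1 from rfl]
    push_cast
    ring
  have hder1 : ∀ (k : ℕ) (x : ℝ), HasDerivAt (f1 k) (f2 k x) x := by
    intro k x
    simp only [hf1def, hf2def]
    have h := (hasDerivAt_pow (2 * k + 1) x).const_mul (eulerBeta (k + 1) * (2 * (k : ℝ) + 2))
    convert h using 1
    all_goals try rfl
    rw [show 2 * k + 1 - 1 = 2 * k from rfl]
    push_cast
    ring
  -- norm bounds on s
  have habs : ∀ (k : ℕ) (c : ℝ) (x : ℝ), 0 ≤ c → x ∈ s → ∀ n : ℕ,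
      |eulerBeta (k + 1) * c * x ^ n| ≤ 4 ^ (k + 1) * c * r ^ n := by
    intro k c x hc hx n
    rw [abs_mul, abs_mul, ← pow_abs, abs_of_nonneg (hb0 k), abs_of_nonneg hc]
    have h1 : |x| ^ n ≤ r ^ n := pow_le_pow_left₀ (abs_nonneg x) (hxr x hx) n
    have := mul_le_mul (mul_le_mul (hb4 k) le_rfl hc (by positivity)) h1 (by positivity)
      (by positivity)
    exact this
  -- summable majorants
  have hu0 : Summable (fun k : ℕ => (4 : ℝ) ^ (k + 1) * 1 * r ^ (2 * k + 2)) := by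
    refine (summable_poly_geom hqabs 0 0 (4 * r ^ 2)).congr (fun k => ?_)
    have : r ^ (2 * k + 2) = (r ^ 2) ^ k * r ^ 2 := by
      rw [pow_add, pow_mul]
    rw [this, mul_pow]
    ring
  have hu1 : Summable (fun k : ℕ => (4 : ℝ) ^ (k + 1) * (2 * (k : ℝ) + 2) * r ^ (2 * k + 1)) := by
    refine (summable_poly_geom hqabs 0 (8 * r) (8 * r)).congr (fun k => ?_)
    have : r ^ (2 * k + 1) = (r ^ 2) ^ k * r := by rw [pow_add, pow_mul, pow_one]
    rw [this, mul_pow]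
    ring
  have hu2 : Summable (fun k : ℕ =>
      (4 : ℝ) ^ (k + 1) * ((2 * (k : ℝ) + 2) * (2 * (k : ℝ) + 1)) * r ^ (2 * k)) := by
    refine (summable_poly_geom hqabs 16 24 8).congr (fun k => ?_)
    have : r ^ (2 * k) = (r ^ 2) ^ k := by rw [pow_mul]
    rw [this, mul_pow]
    ring
  -- summability of the actual series at points of s
  have hsum_f : ∀ x ∈ s, Summable (fun k => f k x) := by
    intro x hx
    refine Summable.of_norm_bounded hu0 (fun k => ?_)
    simpa [Real.norm_eq_abs, hfdef, abs_mul, abs_pow] using habs k 1 x zero_le_one hx (2 * k + 2)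
  have hsum_f1 : ∀ x ∈ s, Summable (fun k => f1 k x) := by
    intro x hx
    refine Summable.of_norm_bounded hu1 (fun k => ?_)
    simpa [Real.norm_eq_abs, hf1def, abs_mul, abs_pow, mul_assoc] using
      habs k (2 * (k : ℝ) + 2) x (by positivity) hx (2 * k + 1)
  have hsum_f2 : ∀ x ∈ s, Summable (fun k => f2 k x) := by
    intro x hx
    refine Summable.of_norm_bounded hu2 (fun k => ?_)
    simpa [Real.norm_eq_abs, hf2def, abs_mul, abs_pow, mul_assoc] using
      habs k ((2 * (k : ℝ) + 2) * (2 * (k : ℝ) + 1)) x (by positivity) hx (2 * k)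
  -- first derivative of the sum
  have hT : ∀ x ∈ s, HasDerivAt (fun z => ∑' k, f k z) (∑' k, f1 k x) x := by
    intro x hx
    exact hasDerivAt_tsum_of_isPreconnected hu1 hs hsc (fun k y _ => hder k y)
      (fun k y hy => by
        simpa [Real.norm_eq_abs, hf1def, abs_mul, abs_pow, mul_assoc] using
          habs k (2 * (k : ℝ) + 2) y (by positivity) hy (2 * k + 1))
      hvs (hsum_f v hvs) hx
  have hT1 : ∀ x ∈ s, HasDerivAt (fun z => ∑' k, f1 k z) (∑' k, f2 k x) x := by
    intro x hx
    exact hasDerivAt_tsum_of_isPreconnected hu2 hs hsc (fun k y _ => hder1 k y)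
      (fun k y hy => by
        simpa [Real.norm_eq_abs, hf2def, abs_mul, abs_pow, mul_assoc] using
          habs k ((2 * (k : ℝ) + 2) * (2 * (k : ℝ) + 1)) y (by positivity) hy (2 * k))
      hvs (hsum_f1 v hvs) hx
  -- eulerS in terms of f
  have hSeq : eulerS = fun z => 1 - ∑' k, f k z := by
    funext z
    simp only [eulerS, hfdef]
    congr 1
  have hS' : ∀ x ∈ s, HasDerivAt eulerS (-(∑' k, f1 k x)) x := by
    intro x hx
    rw [hSeq]
    simpa using (hT x hx).const_sub 1
  have hderivS : ∀ x ∈ s, deriv eulerS x = -(∑' k, f1 k x) := fun x hx => (hS' x hx).deriv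
  have hS'' : deriv (deriv eulerS) v = -(∑' k, f2 k v) := by
    have hEq : deriv eulerS =ᶠ[nhds v] fun x => -(∑' k, f1 k x) := by
      filter_upwards [hs.mem_nhds hvs] with x hx using hderivS x hx
    rw [hEq.deriv_eq]
    exact ((hT1 v hvs).neg).deriv
  -- telescoping identity
  set g : ℕ → ℝ := fun k => eulerBeta (k + 1) * (2 * (k : ℝ) + 2) ^ 2 * v ^ (2 * k + 1)
    with hgdef
  have hsum_g : Summable g := by
    refine Summable.of_norm_bounded (g :=
      (fun k : ℕ => (4 : ℝ) ^ (k + 1) * ((2 * (k : ℝ) + 2) ^ 2) * r ^ (2 * k + 1))) ?_ ?_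
    · refine (summable_poly_geom hqabs (16 * r) (32 * r) (16 * r)).congr (fun k => ?_)
      have : r ^ (2 * k + 1) = (r ^ 2) ^ k * r := by rw [pow_add, pow_mul, pow_one]
      rw [this, mul_pow]
      ring
    · intro k
      have h := habs k ((2 * (k : ℝ) + 2) ^ 2) v (by positivity) hvs (2 * k + 1)
      rw [hgdef]
      exact h
  have hg0 : g 0 = v := by
    have h : eulerBeta 1 = 1 / 4 := rfl
    simp only [hgdef]
    rw [h]
    norm_num
  have htel : HasSum (fun k => g k - g (k + 1)) v := by
    have hG := hsum_g.hasSum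
    have hshift : HasSum (fun k => g (k + 1)) ((∑' k, g k) - g 0) := by
      apply (hasSum_nat_add_iff 1).mpr
      simpa using hG
    have := hG.sub hshift
    simpa [hg0] using this
  -- the combined series equals the telescoping one
  have hcomb : ∀ k : ℕ,
      v * (1 - 4 * v ^ 2) * f2 k v + (1 - 4 * v ^ 2) * f1 k v + v * f k v
        = g k - g (k + 1) := by
    intro k
    have hbk : eulerBeta (k + 1 + 1) =
        eulerBeta (k + 1) *
          ((4 * (k + 1 : ℝ) - 1) * (4 * (k + 1 : ℝ) + 1)) / ((2 * (k + 1 : ℝ) + 2) ^ 2) :=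
      eulerBeta_succ k
    have hd : ((2 * (k + 1 : ℝ) + 2) ^ 2) ≠ 0 := by positivity
    simp only [hfdef, hf1def, hf2def, hgdef, hbk]
    push_cast
    field_simp
    ring
  have hRHS : HasSum (fun k =>
      v * (1 - 4 * v ^ 2) * f2 k v + (1 - 4 * v ^ 2) * f1 k v + v * f k v)
      (v * (1 - 4 * v ^ 2) * (∑' k, f2 k v) + (1 - 4 * v ^ 2) * (∑' k, f1 k v)
        + v * (∑' k, f k v)) := by
    exact ((((hsum_f2 v hvs).hasSum.mul_left _).add
      ((hsum_f1 v hvs).hasSum.mul_left _)).add ((hsum_f v hvs).hasSum.mul_left _))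
  have hkey : v * (1 - 4 * v ^ 2) * (∑' k, f2 k v) + (1 - 4 * v ^ 2) * (∑' k, f1 k v)
      + v * (∑' k, f k v) = v := by
    have heq : (fun k =>
        v * (1 - 4 * v ^ 2) * f2 k v + (1 - 4 * v ^ 2) * f1 k v + v * f k v)
          = fun k => g k - g (k + 1) := funext hcomb
    have h2 : HasSum (fun k =>
        v * (1 - 4 * v ^ 2) * f2 k v + (1 - 4 * v ^ 2) * f1 k v + v * f k v) v := by
      rw [heq]; exact htel
    exact hRHS.unique h2
  -- finish
  have hval : eulerS v = 1 - ∑' k, f k v := by rw [hSeq]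
  rw [hS'', hderivS v hvs, hval]
  linear_combination -hkey
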